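/- For the key graph L_{r,s} (a cycle C_r with a path P_s attached by an edge to one cycle vertex, r ≠ 4, r ≡ 0 mod 5 and s ≡ 0 mod 5), the disjunctive total domination number equals 2n/5 where n = r + s. -/

import Mathlib

open SimpleGraph

def IsDTDSet {V : Type*} (G : SimpleGraph V) (S : Finset V) : Prop :=
  ∀ v : V, (∃ u ∈ S, G.Adj v u) ∨
    ∃ u ∈ S, ∃ w ∈ S, u ≠ w ∧ G.dist v u = 2 ∧ G.dist v w = 2

noncomputable def dtdNum {V : Type*} (G : SimpleGraph V) : ℕ :=
  sInf {k | ∃ S : Finset V, IsDTDSet G S ∧ S.card = k}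

def keyG (r s : ℕ) : SimpleGraph (Fin r ⊕ Fin s) :=
  SimpleGraph.fromRel (fun a b =>
    match a, b with
    | Sum.inl x, Sum.inl y => ((x : ℕ) + 1) % r = (y : ℕ)
    | Sum.inr x, Sum.inr y => (x : ℕ) + 1 = (y : ℕ)
    | Sum.inl x, Sum.inr y => (x : ℕ) = 0 ∧ (y : ℕ) = 0
    | _, _ => False)


set_option linter.unreachableTactic false
set_option linter.unusedTactic false
set_option linter.unusedVariables false
set_option maxHeartbeats 1000000

namespace DTDAux

variable {r s : ℕ}


variable {r s : ℕ}

lemma adj_inl_inl (hr2 : 2 ≤ r) {i j : Fin r} :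
    (keyG r s).Adj (.inl i) (.inl j) ↔
      (((i : ℕ) + 1) % r = j ∨ ((j : ℕ) + 1) % r = i) := by
  simp only [keyG, fromRel_adj]
  constructor
  · rintro ⟨-, h⟩; exact h
  · intro h
    refine ⟨?_, h⟩
    intro he
    injection he with he
    subst he
    rcases h with h | h <;>
    · rcases Nat.lt_or_ge ((i : ℕ) + 1) r with hlt | hge
      · rw [Nat.mod_eq_of_lt hlt] at h; omega
      · have : (i : ℕ) < r := i.isLt
        have he : (i : ℕ) + 1 = r := by omega
        rw [he, Nat.mod_self] at h
        omega

lemma adj_inr_inr {a b : Fin s} :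
    (keyG r s).Adj (.inr a) (.inr b) ↔ ((a : ℕ) + 1 = b ∨ (b : ℕ) + 1 = a) := by
  simp only [keyG, fromRel_adj]
  constructor
  · rintro ⟨-, h⟩; exact h
  · intro h
    refine ⟨?_, h⟩
    intro he
    injection he with he
    subst he
    omega

lemma adj_inl_inr {i : Fin r} {j : Fin s} :
    (keyG r s).Adj (.inl i) (.inr j) ↔ ((i : ℕ) = 0 ∧ (j : ℕ) = 0) := by
  simp only [keyG, fromRel_adj]
  constructor
  · rintro ⟨-, h | h⟩
    · exact h
    · exact h.elim
  · intro h; exact ⟨by simp, Or.inl h⟩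

lemma adj_inr_inl {i : Fin r} {j : Fin s} :
    (keyG r s).Adj (.inr j) (.inl i) ↔ ((i : ℕ) = 0 ∧ (j : ℕ) = 0) := by
  rw [SimpleGraph.adj_comm]; exact adj_inl_inr

lemma dist_two_cases {V : Type*} {G : SimpleGraph V} {v u : V} (h : G.dist v u = 2) :
    v ≠ u ∧ ∃ m, G.Adj v m ∧ G.Adj m u := by
  have h0 : G.dist v u ≠ 0 := by omega
  obtain ⟨p, hp⟩ := SimpleGraph.exists_walk_of_dist_ne_zero h0
  rw [h] at hp
  refine ⟨?_, ?_⟩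
  · rintro rfl
    rw [SimpleGraph.dist_self] at h
    omega
  · cases p with
    | nil => simp at hp
    | cons h1 q =>
      cases q with
      | nil => simp at hp
      | cons h2 q2 =>
        cases q2 with
        | nil => exact ⟨_, h1, h2⟩
        | cons h3 q3 => simp [SimpleGraph.Walk.length_cons] at hp

lemma dist_eq_two_intro {V : Type*} {G : SimpleGraph V} {v m u : V}
    (h1 : G.Adj v m) (h2 : G.Adj m u) (hne : v ≠ u) (hna : ¬ G.Adj v u) :
    G.dist v u = 2 := by
  have hle : G.dist v u ≤ 2 := by
    simpa using SimpleGraph.dist_le (SimpleGraph.Walk.cons h1 (SimpleGraph.Walk.cons h2 SimpleGraph.Walk.nil))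
  have h0 : G.dist v u ≠ 0 := by
    rw [SimpleGraph.dist_ne_zero_iff_ne_and_reachable]
    exact ⟨hne, ⟨SimpleGraph.Walk.cons h1 (SimpleGraph.Walk.cons h2 SimpleGraph.Walk.nil)⟩⟩
  have h1' : G.dist v u ≠ 1 := fun hc => hna (SimpleGraph.dist_eq_one_iff_adj.mp hc)
  omega



/-- cycle vertex, indexed mod r -/
def cv (s : ℕ) (hr : 0 < r) (u : ℕ) : Fin r ⊕ Fin s := .inl ⟨u % r, Nat.mod_lt u hr⟩

/-- path vertex -/
def pv (r : ℕ) {j : ℕ} (h : j < s) : Fin r ⊕ Fin s := .inr ⟨j, h⟩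

section

/-- neighbors of a cycle vertex -/
lemma adj_from_cv (hr : 0 < r) (hr2 : 2 ≤ r) (hs0 : 0 < s) {a : ℕ} {u : Fin r ⊕ Fin s} (h : (keyG r s).Adj (cv s hr a) u) :
    u = cv s hr (a + 1) ∨ u = cv s hr (a + (r - 1)) ∨
      (a % r = 0 ∧ u = pv r hs0) := by
  cases u with
  | inl j =>
    rw [cv, adj_inl_inl hr2] at h
    rcases h with h | h
    · left
      simp only [cv]
      congr 1
      apply Fin.ext
      simp only [Fin.val_mk] at h ⊢
      rw [← h, Nat.mod_add_mod]
    · right; left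
      simp only [cv]
      congr 1
      apply Fin.ext
      simp only [Fin.val_mk] at h ⊢
      -- h : (j + 1) % r = a % r ; goal : j = (a + (r-1)) % r
      have hj : (j : ℕ) < r := j.isLt
      rcases Nat.lt_or_ge ((j : ℕ) + 1) r with hlt | hge
      · rw [Nat.mod_eq_of_lt hlt] at h
        have hkey : (a + (r - 1)) % r = ((a % r) + (r - 1)) % r := by
          conv_lhs => rw [Nat.add_mod]
          rw [Nat.mod_eq_of_lt (show r - 1 < r by omega)]
        rw [hkey, ← h]
        have h2 : (j : ℕ) + 1 + (r - 1) = (j : ℕ) + r := by omega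
        rw [h2, Nat.add_mod_right, Nat.mod_eq_of_lt hj]
      · have he : (j : ℕ) + 1 = r := by omega
        rw [he, Nat.mod_self] at h
        have hkey : (a + (r - 1)) % r = ((a % r) + (r - 1)) % r := by
          conv_lhs => rw [Nat.add_mod]
          rw [Nat.mod_eq_of_lt (show r - 1 < r by omega)]
        rw [hkey, ← h, Nat.zero_add, Nat.mod_eq_of_lt (show r - 1 < r by omega)]
        omega
  | inr j =>
    rw [cv, adj_inl_inr] at h
    right; right
    refine ⟨h.1, ?_⟩
    simp [pv]
    exact Fin.ext h.2

/-- neighbors of a path vertex -/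
lemma adj_from_pv (hr : 0 < r) {j : ℕ} (hj : j < s) {u : Fin r ⊕ Fin s} (h : (keyG r s).Adj (pv r hj) u) :
    (∃ h1 : j + 1 < s, u = pv r h1) ∨
    (1 ≤ j ∧ u = pv r (show j - 1 < s by omega)) ∨
    (j = 0 ∧ u = cv s hr 0) := by
  cases u with
  | inl i =>
    rw [pv, adj_inr_inl] at h
    right; right
    refine ⟨h.2, ?_⟩
    simp only [cv]
    congr 1
    apply Fin.ext
    simp [h.1, Nat.zero_mod]
  | inr b =>
    rw [pv, adj_inr_inr] at h
    simp only [Fin.val_mk] at h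
    rcases h with h | h
    · left
      refine ⟨by omega, ?_⟩
      simp only [pv]
      congr 1
      exact Fin.ext (by simp [← h])
    · right; left
      refine ⟨by omega, ?_⟩
      simp only [pv]
      congr 1
      exact Fin.ext (by simp; omega)

end



lemma cv_congr (hr : 0 < r) {a b : ℕ} (h : a % r = b % r) : cv s hr a = cv s hr b := by
  simp [cv, h]

lemma cv_reduce (hr : 0 < r) {a b k : ℕ} (h : a = b + k * r) : cv s hr a = cv s hr b :=
  cv_congr hr (by rw [h, Nat.add_mul_mod_self_right])

lemma cv_eq_iff (hr : 0 < r) {a b : ℕ} : cv s hr a = cv s hr b ↔ a % r = b % r := by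
  constructor
  · intro h; simpa [cv, Fin.ext_iff] using h
  · exact cv_congr hr

lemma cv_ne_pv (hr : 0 < r) {a j : ℕ} (hj : j < s) : cv s hr a ≠ pv r hj := by
  simp [cv, pv]

lemma pv_eq_iff {a b : ℕ} (ha : a < s) (hb : b < s) : pv r ha = pv r hb ↔ a = b := by
  simp [pv, Fin.ext_iff]

/-- dist-2 from a generic cycle vertex -/
lemma dist2_cv_gen (hr : 0 < r) (hr5 : 5 ≤ r) (hs0 : 0 < s) {i : ℕ} (h2 : 2 ≤ i) (hi : i ≤ r - 2)
    {u : Fin r ⊕ Fin s} (h : (keyG r s).dist (cv s hr i) u = 2) :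
    u = cv s hr (i + 2) ∨ u = cv s hr (i - 2) := by
  have hir : i < r := by omega
  obtain ⟨hne, m, h1, h2'⟩ := dist_two_cases h
  rcases adj_from_cv hr (by omega) hs0 h1 with hm | hm | ⟨hm0, _⟩
  · subst hm
    rcases adj_from_cv hr (by omega) hs0 h2' with hu | hu | ⟨hu0, _⟩
    · left
      rw [hu]
      all_goals exact cv_congr hr (by norm_num)
    · exfalso
      apply hne
      rw [hu]; all_goals rw [cv_reduce hr (show i + 1 + (r-1) = i + 1 * r by omega)]
    · exfalso
      rw [Nat.mod_eq_of_lt (show i + 1 < r by omega)] at hu0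
      omega
  · subst hm
    rcases adj_from_cv hr (by omega) hs0 h2' with hu | hu | ⟨hu0, _⟩
    · exfalso
      apply hne
      rw [hu]; all_goals rw [cv_reduce hr (show i + (r-1) + 1 = i + 1 * r by omega)]
    · right
      rw [hu]; all_goals rw [cv_reduce hr (show i + (r-1) + (r-1) = (i - 2) + 2 * r by omega)]
    · exfalso
      have : (i + (r - 1)) % r = i - 1 := by
        have e : i + (r - 1) = (i - 1) + 1 * r := by omega
        rw [e, Nat.add_mul_mod_self_right, Nat.mod_eq_of_lt (by omega)]
      omega
  · exfalso
    rw [Nat.mod_eq_of_lt hir] at hm0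
    omega

/-- dist-2 from c_0 -/
lemma dist2_cv0 (hr : 0 < r) (hr5 : 5 ≤ r) (hs5 : 5 ≤ s)
    {u : Fin r ⊕ Fin s} (h : (keyG r s).dist (cv s hr 0) u = 2) :
    u = cv s hr 2 ∨ u = cv s hr (r - 2) ∨ u = pv r (show 1 < s by omega) := by
  obtain ⟨hne, m, h1, h2'⟩ := dist_two_cases h
  rcases adj_from_cv hr (by omega) (by omega) h1 with hm | hm | ⟨-, hm⟩
  · subst hm
    rcases adj_from_cv hr (by omega) (show 0 < s by omega) h2' with hu | hu | ⟨hu0, _⟩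
    · left; rw [hu]; all_goals exact cv_congr hr (by norm_num)
    · exfalso; apply hne
      rw [hu]; all_goals rw [cv_reduce hr (show 0 + 1 + (r-1) = 0 + 1 * r by omega)]
    · exfalso
      rw [Nat.mod_eq_of_lt (show 0 + 1 < r by omega)] at hu0
      omega
  · subst hm
    rcases adj_from_cv hr (by omega) (show 0 < s by omega) h2' with hu | hu | ⟨hu0, _⟩
    · exfalso; apply hne
      rw [hu]; all_goals rw [cv_reduce hr (show 0 + (r-1) + 1 = 0 + 1 * r by omega)]
    · right; left
      rw [hu]; all_goals rw [cv_reduce hr (show 0 + (r-1) + (r-1) = (r - 2) + 1 * r by omega)]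
    · exfalso
      have : (0 + (r - 1)) % r = r - 1 := by
        rw [Nat.zero_add, Nat.mod_eq_of_lt (by omega)]
      omega
  · subst hm
    rcases adj_from_pv hr (show 0 < s by omega) h2' with ⟨hj1, hu⟩ | ⟨hj, -⟩ | ⟨-, hu⟩
    · right; right
      rw [hu]
      all_goals rw [pv_eq_iff]
    · omega
    · exfalso; apply hne; rw [hu]
      all_goals exact cv_congr hr (by norm_num)

/-- dist-2 from c_1 -/
lemma dist2_cv1 (hr : 0 < r) (hr5 : 5 ≤ r) (hs5 : 5 ≤ s)
    {u : Fin r ⊕ Fin s} (h : (keyG r s).dist (cv s hr 1) u = 2) :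
    u = cv s hr 3 ∨ u = cv s hr (r - 1) ∨ u = pv r (show 0 < s by omega) := by
  obtain ⟨hne, m, h1, h2'⟩ := dist_two_cases h
  rcases adj_from_cv hr (by omega) (show 0 < s by omega) h1 with hm | hm | ⟨hm0, -⟩
  · subst hm
    rcases adj_from_cv hr (by omega) (show 0 < s by omega) h2' with hu | hu | ⟨hu0, _⟩
    · left; rw [hu]; all_goals exact cv_congr hr (by norm_num)
    · exfalso; apply hne
      rw [hu]; all_goals rw [cv_reduce hr (show 1 + 1 + (r-1) = 1 + 1 * r by omega)]
    · exfalso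
      rw [Nat.mod_eq_of_lt (show 1 + 1 < r by omega)] at hu0
      omega
  · subst hm
    rcases adj_from_cv hr (by omega) (show 0 < s by omega) h2' with hu | hu | ⟨hu0, hu⟩
    · exfalso; apply hne
      rw [hu]; all_goals rw [cv_reduce hr (show 1 + (r-1) + 1 = 1 + 1 * r by omega)]
    · right; left
      rw [hu]; all_goals rw [cv_reduce hr (show 1 + (r-1) + (r-1) = (r - 1) + 1 * r by omega)]
    · -- m = cv (1 + (r-1)) = cv r, index mod r = 0, so u = p_0
      right; right
      exact hu
  · exfalso
    rw [Nat.mod_eq_of_lt (show 1 < r by omega)] at hm0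
    omega

/-- dist-2 from c_{r-1} -/
lemma dist2_cvr1 (hr : 0 < r) (hr5 : 5 ≤ r) (hs5 : 5 ≤ s)
    {u : Fin r ⊕ Fin s} (h : (keyG r s).dist (cv s hr (r - 1)) u = 2) :
    u = cv s hr 1 ∨ u = cv s hr (r - 3) ∨ u = pv r (show 0 < s by omega) := by
  obtain ⟨hne, m, h1, h2'⟩ := dist_two_cases h
  rcases adj_from_cv hr (by omega) (show 0 < s by omega) h1 with hm | hm | ⟨hm0, -⟩
  · subst hm
    rcases adj_from_cv hr (by omega) (show 0 < s by omega) h2' with hu | hu | ⟨hu0, hu⟩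
    · left
      rw [hu]; all_goals rw [cv_reduce hr (show r - 1 + 1 + 1 = 1 + 1 * r by omega)]
    · exfalso; apply hne
      rw [hu]; all_goals rw [cv_reduce hr (show r - 1 + 1 + (r-1) = (r-1) + 1 * r by omega)]
    · -- m = cv r : index ≡ 0, u = p_0
      right; right
      exact hu
  · subst hm
    rcases adj_from_cv hr (by omega) (show 0 < s by omega) h2' with hu | hu | ⟨hu0, _⟩
    · exfalso; apply hne
      rw [hu]; all_goals rw [cv_reduce hr (show r - 1 + (r-1) + 1 = (r-1) + 1 * r by omega)]
    · right; left
      rw [hu]; all_goals rw [cv_reduce hr (show r - 1 + (r-1) + (r-1) = (r - 3) + 2 * r by omega)]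
    · exfalso
      have : (r - 1 + (r - 1)) % r = r - 2 := by
        have e : r - 1 + (r - 1) = (r - 2) + 1 * r := by omega
        rw [e, Nat.add_mul_mod_self_right, Nat.mod_eq_of_lt (by omega)]
      omega
  · exfalso
    rw [Nat.mod_eq_of_lt (show r - 1 < r by omega)] at hm0
    omega

/-- dist-2 from p_0 -/
lemma dist2_pv0 (hr : 0 < r) (hr5 : 5 ≤ r) (hs5 : 5 ≤ s)
    {u : Fin r ⊕ Fin s} (h : (keyG r s).dist (pv r (show 0 < s by omega)) u = 2) :
    u = pv r (show 2 < s by omega) ∨ u = cv s hr 1 ∨ u = cv s hr (r - 1) := by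
  obtain ⟨hne, m, h1, h2'⟩ := dist_two_cases h
  rcases adj_from_pv hr (show 0 < s by omega) h1 with ⟨hj1, hm⟩ | ⟨hj, -⟩ | ⟨-, hm⟩
  · subst hm
    rcases adj_from_pv hr hj1 h2' with ⟨hj2, hu⟩ | ⟨-, hu⟩ | ⟨h10, -⟩
    · left; rw [hu]; all_goals rw [pv_eq_iff]
    · exfalso; apply hne; rw [hu]; all_goals rw [pv_eq_iff]
    · omega
  · omega
  · subst hm
    rcases adj_from_cv hr (by omega) (show 0 < s by omega) h2' with hu | hu | ⟨-, hu⟩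
    · right; left; rw [hu]; all_goals exact cv_congr hr (by norm_num)
    · right; right
      rw [hu]; all_goals rw [cv_reduce hr (show 0 + (r-1) = (r-1) + 0 * r by omega)]
    · exfalso; apply hne; rw [hu]; all_goals rw [pv_eq_iff]

/-- dist-2 from p_1 -/
lemma dist2_pv1 (hr : 0 < r) (hr5 : 5 ≤ r) (hs5 : 5 ≤ s)
    {u : Fin r ⊕ Fin s} (h : (keyG r s).dist (pv r (show 1 < s by omega)) u = 2) :
    u = cv s hr 0 ∨ u = pv r (show 3 < s by omega) := by
  obtain ⟨hne, m, h1, h2'⟩ := dist_two_cases h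
  rcases adj_from_pv hr (show 1 < s by omega) h1 with ⟨hj1, hm⟩ | ⟨-, hm⟩ | ⟨h10, -⟩
  · subst hm
    rcases adj_from_pv hr hj1 h2' with ⟨hj2, hu⟩ | ⟨-, hu⟩ | ⟨h20, -⟩
    · right; rw [hu]; all_goals rw [pv_eq_iff]
    · exfalso; apply hne; rw [hu]; all_goals rw [pv_eq_iff]
    · omega
  · subst hm
    rcases adj_from_pv hr (show 1 - 1 < s by omega) h2' with ⟨hj2, hu⟩ | ⟨hj0, -⟩ | ⟨-, hu⟩
    · exfalso; apply hne; rw [hu]; all_goals rw [pv_eq_iff]; all_goals omega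
    · omega
    · left; exact hu
  · omega

/-- dist-2 from generic path vertex p_j, 2 ≤ j ≤ s-3 -/
lemma dist2_pv_gen (hr : 0 < r) (hr5 : 5 ≤ r) (hs5 : 5 ≤ s) {j : ℕ} (h2 : 2 ≤ j) (hj3 : j ≤ s - 3)
    (hj : j < s) {u : Fin r ⊕ Fin s} (h : (keyG r s).dist (pv r hj) u = 2) :
    u = pv r (show j + 2 < s by omega) ∨ u = pv r (show j - 2 < s by omega) := by
  obtain ⟨hne, m, h1, h2'⟩ := dist_two_cases h
  rcases adj_from_pv hr hj h1 with ⟨hj1, hm⟩ | ⟨-, hm⟩ | ⟨h10, -⟩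
  · subst hm
    rcases adj_from_pv hr hj1 h2' with ⟨hj2, hu⟩ | ⟨-, hu⟩ | ⟨h20, -⟩
    · left; rw [hu]; all_goals rw [pv_eq_iff]
    · exfalso; apply hne; rw [hu]; all_goals rw [pv_eq_iff]; all_goals omega
    · omega
  · subst hm
    rcases adj_from_pv hr (show j - 1 < s by omega) h2' with ⟨hj2, hu⟩ | ⟨hj0, hu⟩ | ⟨h20, -⟩
    · exfalso; apply hne; rw [hu]; all_goals rw [pv_eq_iff]; all_goals omega
    · right; rw [hu]; all_goals rw [pv_eq_iff]; all_goals omega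
    · omega
  · omega

/-- dist-2 from p_{s-2}: only p_{s-4} -/
lemma dist2_pvs2 (hr : 0 < r) (hr5 : 5 ≤ r) (hs5 : 5 ≤ s)
    {u : Fin r ⊕ Fin s} (h : (keyG r s).dist (pv r (show s - 2 < s by omega)) u = 2) :
    u = pv r (show s - 4 < s by omega) := by
  obtain ⟨hne, m, h1, h2'⟩ := dist_two_cases h
  rcases adj_from_pv hr (show s - 2 < s by omega) h1 with ⟨hj1, hm⟩ | ⟨-, hm⟩ | ⟨h10, -⟩
  · subst hm
    rcases adj_from_pv hr hj1 h2' with ⟨hj2, hu⟩ | ⟨-, hu⟩ | ⟨h20, -⟩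
    · omega
    · exfalso; apply hne; rw [hu]; all_goals rw [pv_eq_iff]; all_goals omega
    · omega
  · subst hm
    rcases adj_from_pv hr (show s - 2 - 1 < s by omega) h2' with ⟨hj2, hu⟩ | ⟨hj0, hu⟩ | ⟨h20, -⟩
    · exfalso; apply hne; rw [hu]; all_goals rw [pv_eq_iff]; all_goals omega
    · rw [hu]; all_goals rw [pv_eq_iff]; all_goals omega
    · omega
  · omega

/-- dist-2 from p_{s-1}: only p_{s-3} -/
lemma dist2_pvs1 (hr : 0 < r) (hr5 : 5 ≤ r) (hs5 : 5 ≤ s)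
    {u : Fin r ⊕ Fin s} (h : (keyG r s).dist (pv r (show s - 1 < s by omega)) u = 2) :
    u = pv r (show s - 3 < s by omega) := by
  obtain ⟨hne, m, h1, h2'⟩ := dist_two_cases h
  rcases adj_from_pv hr (show s - 1 < s by omega) h1 with ⟨hj1, hm⟩ | ⟨-, hm⟩ | ⟨h10, -⟩
  · omega
  · subst hm
    rcases adj_from_pv hr (show s - 1 - 1 < s by omega) h2' with ⟨hj2, hu⟩ | ⟨hj0, hu⟩ | ⟨h20, -⟩
    · exfalso; apply hne; rw [hu]; all_goals rw [pv_eq_iff]; all_goals omega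
    · rw [hu]; all_goals rw [pv_eq_iff]; all_goals omega
    · omega
  · omega





def bb (hr : 0 < r) (S : Finset (Fin r ⊕ Fin s)) (u : ℕ) : Bool := decide (cv s hr u ∈ S)
def yy (r : ℕ) (S : Finset (Fin r ⊕ Fin s)) (j : ℕ) : Bool :=
  if h : j < s then decide (pv r h ∈ S) else false
def twoOf (A B C : Prop) : Prop := (A ∧ B) ∨ (A ∧ C) ∨ (B ∧ C)

lemma bb_true {hr : 0 < r} {S : Finset (Fin r ⊕ Fin s)} {a : ℕ} (h : cv s hr a ∈ S) :
    bb hr S a = true := by simp [bb, h]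

lemma bb_reduce (hr : 0 < r) (S : Finset (Fin r ⊕ Fin s)) {a b k : ℕ} (h : a = b + k * r) :
    bb hr S a = bb hr S b := by simp [bb, cv_reduce hr h]

lemma yy_true {S : Finset (Fin r ⊕ Fin s)} {j : ℕ} {hj : j < s} (h : pv r hj ∈ S) :
    yy r S j = true := by simp [yy, hj, h]


section
variable (hr : 0 < r) (hr5 : 5 ≤ r) (hs5 : 5 ≤ s) (S : Finset (Fin r ⊕ Fin s))
  (hS : IsDTDSet (keyG r s) S)
include hr hr5 hs5 hS

lemma conGen {i : ℕ} (h2 : 2 ≤ i) (hi : i ≤ r - 2) :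
    bb hr S (i-1) = true ∨ bb hr S (i+1) = true ∨
      (bb hr S (i-2) = true ∧ bb hr S (i+2) = true) := by
  rcases hS (cv s hr i) with ⟨u, huS, hadj⟩ | ⟨u, huS, w, hwS, hne, hdu, hdw⟩
  · rcases adj_from_cv hr (by omega) (by omega) hadj with hu | hu | ⟨h0, -⟩
    · right; left; rw [hu] at huS; exact bb_true huS
    · left
      rw [hu, cv_reduce hr (show i + (r-1) = (i-1) + 1 * r by omega)] at huS
      exact bb_true huS
    · rw [Nat.mod_eq_of_lt (by omega)] at h0; omega
  · right; right
    rcases dist2_cv_gen hr hr5 (by omega) h2 hi hdu with hu | hu <;>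
      rcases dist2_cv_gen hr hr5 (by omega) h2 hi hdw with hw | hw
    · exact absurd (hu.trans hw.symm) hne
    · rw [hu] at huS; rw [hw] at hwS; exact ⟨bb_true hwS, bb_true huS⟩
    · rw [hu] at huS; rw [hw] at hwS; exact ⟨bb_true huS, bb_true hwS⟩
    · exact absurd (hu.trans hw.symm) hne

lemma conC0 :
    bb hr S 1 = true ∨ bb hr S (r-1) = true ∨ yy r S 0 = true ∨
      twoOf (bb hr S 2 = true) (bb hr S (r-2) = true) (yy r S 1 = true) := by
  rcases hS (cv s hr 0) with ⟨u, huS, hadj⟩ | ⟨u, huS, w, hwS, hne, hdu, hdw⟩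
  · rcases adj_from_cv hr (by omega) (by omega) hadj with hu | hu | ⟨-, hu⟩
    · left; rw [hu] at huS; exact bb_true huS
    · right; left
      rw [hu, cv_reduce hr (show 0 + (r-1) = (r-1) + 0 * r by omega)] at huS
      exact bb_true huS
    · right; right; left; rw [hu] at huS; exact yy_true huS
  · right; right; right
    rcases dist2_cv0 hr hr5 hs5 hdu with hu | hu | hu <;>
      rcases dist2_cv0 hr hr5 hs5 hdw with hw | hw | hw <;>
      rw [hu] at huS <;> rw [hw] at hwS
    · exact absurd (hu.trans hw.symm) hne
    · exact Or.inl ⟨bb_true huS, bb_true hwS⟩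
    · exact Or.inr (Or.inl ⟨bb_true huS, yy_true hwS⟩)
    · exact Or.inl ⟨bb_true hwS, bb_true huS⟩
    · exact absurd (hu.trans hw.symm) hne
    · exact Or.inr (Or.inr ⟨bb_true huS, yy_true hwS⟩)
    · exact Or.inr (Or.inl ⟨bb_true hwS, yy_true huS⟩)
    · exact Or.inr (Or.inr ⟨bb_true hwS, yy_true huS⟩)
    · exact absurd (hu.trans hw.symm) hne

lemma conC1 :
    bb hr S 0 = true ∨ bb hr S 2 = true ∨
      twoOf (bb hr S 3 = true) (bb hr S (r-1) = true) (yy r S 0 = true) := by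
  rcases hS (cv s hr 1) with ⟨u, huS, hadj⟩ | ⟨u, huS, w, hwS, hne, hdu, hdw⟩
  · rcases adj_from_cv hr (by omega) (by omega) hadj with hu | hu | ⟨h0, -⟩
    · right; left; rw [hu] at huS; exact bb_true huS
    · left
      rw [hu, cv_reduce hr (show 1 + (r-1) = 0 + 1 * r by omega)] at huS
      exact bb_true huS
    · rw [Nat.mod_eq_of_lt (by omega)] at h0; omega
  · right; right
    rcases dist2_cv1 hr hr5 hs5 hdu with hu | hu | hu <;>
      rcases dist2_cv1 hr hr5 hs5 hdw with hw | hw | hw <;>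
      rw [hu] at huS <;> rw [hw] at hwS
    · exact absurd (hu.trans hw.symm) hne
    · exact Or.inl ⟨bb_true huS, bb_true hwS⟩
    · exact Or.inr (Or.inl ⟨bb_true huS, yy_true hwS⟩)
    · exact Or.inl ⟨bb_true hwS, bb_true huS⟩
    · exact absurd (hu.trans hw.symm) hne
    · exact Or.inr (Or.inr ⟨bb_true huS, yy_true hwS⟩)
    · exact Or.inr (Or.inl ⟨bb_true hwS, yy_true huS⟩)
    · exact Or.inr (Or.inr ⟨bb_true hwS, yy_true huS⟩)
    · exact absurd (hu.trans hw.symm) hne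

lemma conCr1 :
    bb hr S 0 = true ∨ bb hr S (r-2) = true ∨
      twoOf (bb hr S (r-3) = true) (bb hr S 1 = true) (yy r S 0 = true) := by
  rcases hS (cv s hr (r-1)) with ⟨u, huS, hadj⟩ | ⟨u, huS, w, hwS, hne, hdu, hdw⟩
  · rcases adj_from_cv hr (by omega) (by omega) hadj with hu | hu | ⟨h0, -⟩
    · left
      rw [hu, cv_reduce hr (show r - 1 + 1 = 0 + 1 * r by omega)] at huS
      exact bb_true huS
    · right; left
      rw [hu, cv_reduce hr (show r - 1 + (r-1) = (r-2) + 1 * r by omega)] at huS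
      exact bb_true huS
    · rw [Nat.mod_eq_of_lt (by omega)] at h0; omega
  · right; right
    rcases dist2_cvr1 hr hr5 hs5 hdu with hu | hu | hu <;>
      rcases dist2_cvr1 hr hr5 hs5 hdw with hw | hw | hw <;>
      rw [hu] at huS <;> rw [hw] at hwS
    · exact absurd (hu.trans hw.symm) hne
    · exact Or.inl ⟨bb_true hwS, bb_true huS⟩
    · exact Or.inr (Or.inr ⟨bb_true huS, yy_true hwS⟩)
    · exact Or.inl ⟨bb_true huS, bb_true hwS⟩
    · exact absurd (hu.trans hw.symm) hne
    · exact Or.inr (Or.inl ⟨bb_true huS, yy_true hwS⟩)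
    · exact Or.inr (Or.inr ⟨bb_true hwS, yy_true huS⟩)
    · exact Or.inr (Or.inl ⟨bb_true hwS, yy_true huS⟩)
    · exact absurd (hu.trans hw.symm) hne

lemma conP0 :
    bb hr S 0 = true ∨ yy r S 1 = true ∨
      twoOf (yy r S 2 = true) (bb hr S 1 = true) (bb hr S (r-1) = true) := by
  rcases hS (pv r (show 0 < s by omega)) with ⟨u, huS, hadj⟩ | ⟨u, huS, w, hwS, hne, hdu, hdw⟩
  · rcases adj_from_pv hr (show 0 < s by omega) hadj with ⟨h1, hu⟩ | ⟨h1, -⟩ | ⟨-, hu⟩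
    · right; left; rw [hu] at huS; exact yy_true huS
    · omega
    · left; rw [hu] at huS; exact bb_true huS
  · right; right
    rcases dist2_pv0 hr hr5 hs5 hdu with hu | hu | hu <;>
      rcases dist2_pv0 hr hr5 hs5 hdw with hw | hw | hw <;>
      rw [hu] at huS <;> rw [hw] at hwS
    · exact absurd (hu.trans hw.symm) hne
    · exact Or.inl ⟨yy_true huS, bb_true hwS⟩
    · exact Or.inr (Or.inl ⟨yy_true huS, bb_true hwS⟩)
    · exact Or.inl ⟨yy_true hwS, bb_true huS⟩
    · exact absurd (hu.trans hw.symm) hne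
    · exact Or.inr (Or.inr ⟨bb_true huS, bb_true hwS⟩)
    · exact Or.inr (Or.inl ⟨yy_true hwS, bb_true huS⟩)
    · exact Or.inr (Or.inr ⟨bb_true hwS, bb_true huS⟩)
    · exact absurd (hu.trans hw.symm) hne

lemma conP1 :
    yy r S 0 = true ∨ yy r S 2 = true ∨
      (bb hr S 0 = true ∧ yy r S 3 = true) := by
  rcases hS (pv r (show 1 < s by omega)) with ⟨u, huS, hadj⟩ | ⟨u, huS, w, hwS, hne, hdu, hdw⟩
  · rcases adj_from_pv hr (show 1 < s by omega) hadj with ⟨h1, hu⟩ | ⟨-, hu⟩ | ⟨h0, -⟩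
    · right; left; rw [hu] at huS; exact yy_true huS
    · left; rw [hu] at huS; exact yy_true huS
    · omega
  · right; right
    rcases dist2_pv1 hr hr5 hs5 hdu with hu | hu <;>
      rcases dist2_pv1 hr hr5 hs5 hdw with hw | hw <;>
      rw [hu] at huS <;> rw [hw] at hwS
    · exact absurd (hu.trans hw.symm) hne
    · exact ⟨bb_true huS, yy_true hwS⟩
    · exact ⟨bb_true hwS, yy_true huS⟩
    · exact absurd (hu.trans hw.symm) hne

lemma conPgen {j : ℕ} (h2 : 2 ≤ j) (hj3 : j ≤ s - 3) :
    yy r S (j-1) = true ∨ yy r S (j+1) = true ∨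
      (yy r S (j-2) = true ∧ yy r S (j+2) = true) := by
  have hj : j < s := by omega
  rcases hS (pv r hj) with ⟨u, huS, hadj⟩ | ⟨u, huS, w, hwS, hne, hdu, hdw⟩
  · rcases adj_from_pv hr hj hadj with ⟨h1, hu⟩ | ⟨-, hu⟩ | ⟨h0, -⟩
    · right; left; rw [hu] at huS; exact yy_true huS
    · left; rw [hu] at huS; exact yy_true huS
    · omega
  · right; right
    rcases dist2_pv_gen hr hr5 hs5 h2 hj3 hj hdu with hu | hu <;>
      rcases dist2_pv_gen hr hr5 hs5 h2 hj3 hj hdw with hw | hw <;>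
      rw [hu] at huS <;> rw [hw] at hwS
    · exact absurd (hu.trans hw.symm) hne
    · exact ⟨yy_true hwS, yy_true huS⟩
    · exact ⟨yy_true huS, yy_true hwS⟩
    · exact absurd (hu.trans hw.symm) hne

lemma conPs2 : yy r S (s-3) = true ∨ yy r S (s-1) = true := by
  rcases hS (pv r (show s - 2 < s by omega)) with ⟨u, huS, hadj⟩ | ⟨u, huS, w, hwS, hne, hdu, hdw⟩
  · rcases adj_from_pv hr (show s - 2 < s by omega) hadj with ⟨h1, hu⟩ | ⟨-, hu⟩ | ⟨h0, -⟩
    · right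
      have he : s - 2 + 1 = s - 1 := by omega
      rw [hu] at huS
      rw [show (s:ℕ) - 1 = s - 2 + 1 from he.symm]
      exact yy_true huS
    · left
      have he : s - 2 - 1 = s - 3 := by omega
      rw [hu] at huS
      rw [show (s:ℕ) - 3 = s - 2 - 1 from he.symm]
      exact yy_true huS
    · omega
  · exfalso
    have hu := dist2_pvs2 hr hr5 hs5 hdu
    have hw := dist2_pvs2 hr hr5 hs5 hdw
    exact hne (hu.trans hw.symm)

lemma conPs1 : yy r S (s-2) = true := by
  rcases hS (pv r (show s - 1 < s by omega)) with ⟨u, huS, hadj⟩ | ⟨u, huS, w, hwS, hne, hdu, hdw⟩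
  · rcases adj_from_pv hr (show s - 1 < s by omega) hadj with ⟨h1, -⟩ | ⟨-, hu⟩ | ⟨h0, -⟩
    · omega
    · have he : s - 1 - 1 = s - 2 := by omega
      rw [hu] at huS
      rw [show (s:ℕ) - 2 = s - 1 - 1 from he.symm]
      exact yy_true huS
    · omega
  · exfalso
    have hu := dist2_pvs1 hr hr5 hs5 hdu
    have hw := dist2_pvs1 hr hr5 hs5 hdw
    exact hne (hu.trans hw.symm)

end



set_option maxRecDepth 10000 in
set_option synthInstance.maxSize 2000 in
set_option synthInstance.maxHeartbeats 1000000 in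
set_option maxHeartbeats 4000000 in
/-- 5-window lemma: positions w1..w7 stand for t-1..t+5; constraints at t+1,t+2,t+3;
conclusion: window t..t+4 has ≥ 2. -/
lemma loc_window (w1 w2 w3 w4 w5 w6 w7 : Bool)
    (h1 : w2 = true ∨ w4 = true ∨ (w1 = true ∧ w5 = true))
    (h2 : w3 = true ∨ w5 = true ∨ (w2 = true ∧ w6 = true))
    (h3 : w4 = true ∨ w6 = true ∨ (w3 = true ∧ w7 = true)) :
    2 ≤ w2.toNat + w3.toNat + w4.toNat + w5.toNat + w6.toNat := by
  revert h1 h2 h3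
  revert w1 w2 w3 w4 w5 w6 w7
  decide

set_option maxRecDepth 100000 in
set_option synthInstance.maxSize 2000 in
set_option synthInstance.maxHeartbeats 1000000 in
set_option maxHeartbeats 4000000 in
/-- junction lemma: a6..a1 = b(r-6)..b(r-1), c0..c6 = b0..b6, y0 y1 path bits -/
lemma loc_junction (a6 a5 a4 a3 a2 a1 c0 c1 c2 c3 c4 c5 c6 y0 y1 : Bool)
    (hm4 : a5 = true ∨ a3 = true ∨ (a6 = true ∧ a2 = true))
    (hm3 : a4 = true ∨ a2 = true ∨ (a5 = true ∧ a1 = true))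
    (hm2 : a3 = true ∨ a1 = true ∨ (a4 = true ∧ c0 = true))
    (hm1 : c0 = true ∨ a2 = true ∨ twoOf (a3 = true) (c1 = true) (y0 = true))
    (h0 : c1 = true ∨ a1 = true ∨ y0 = true ∨ twoOf (c2 = true) (a2 = true) (y1 = true))
    (h1 : c0 = true ∨ c2 = true ∨ twoOf (c3 = true) (a1 = true) (y0 = true))
    (h2 : c1 = true ∨ c3 = true ∨ (c0 = true ∧ c4 = true))
    (h3 : c2 = true ∨ c4 = true ∨ (c1 = true ∧ c5 = true))
    (h4 : c3 = true ∨ c5 = true ∨ (c2 = true ∧ c6 = true)) :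
    6 ≤ (a4.toNat + a3.toNat + a2.toNat + a1.toNat + c0.toNat) +
        (a3.toNat + a2.toNat + a1.toNat + c0.toNat + c1.toNat) +
        (a2.toNat + a1.toNat + c0.toNat + c1.toNat + c2.toNat) +
        (a1.toNat + c0.toNat + c1.toNat + c2.toNat + c3.toNat) +
        (c0.toNat + c1.toNat + c2.toNat + c3.toNat + c4.toNat) := by
  unfold twoOf at hm1 h0 h1
  revert hm4 hm3 hm2 hm1 h0 h1 h2 h3 h4
  revert a6 a5 a4 a3 a2 a1 c0 c1 c2 c3 c4 c5 c6 y0 y1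
  decide

set_option maxRecDepth 10000 in
set_option synthInstance.maxSize 2000 in
set_option synthInstance.maxHeartbeats 1000000 in
set_option maxHeartbeats 4000000 in
/-- r = 5 cycle lemma -/
lemma loc_r5 (c0 c1 c2 c3 c4 : Bool)
    (h2 : c1 = true ∨ c3 = true ∨ (c0 = true ∧ c4 = true))
    (h3 : c2 = true ∨ c4 = true ∨ (c1 = true ∧ c0 = true)) :
    2 ≤ c0.toNat + c1.toNat + c2.toNat + c3.toNat + c4.toNat := by
  revert h2 h3; revert c0 c1 c2 c3 c4; decide

set_option maxRecDepth 10000 in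
set_option synthInstance.maxSize 2000 in
set_option synthInstance.maxHeartbeats 1000000 in
set_option maxHeartbeats 4000000 in
/-- s = 5 path block -/
lemma loc_s5 (x0 x1 xm1 y0 y1 y2 y3 y4 : Bool)
    (hp0 : x0 = true ∨ y1 = true ∨ twoOf (y2 = true) (x1 = true) (xm1 = true))
    (hp1 : y0 = true ∨ y2 = true ∨ (x0 = true ∧ y3 = true))
    (hp2 : y1 = true ∨ y3 = true ∨ (y0 = true ∧ y4 = true))
    (hp3 : y2 = true ∨ y4 = true)
    (hp4 : y3 = true) :
    2 ≤ y0.toNat + y1.toNat + y2.toNat + y3.toNat + y4.toNat := by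
  unfold twoOf at hp0
  revert hp0 hp1 hp2 hp3 hp4; revert x0 x1 xm1 y0 y1 y2 y3 y4; decide

set_option maxRecDepth 10000 in
set_option synthInstance.maxSize 2000 in
set_option synthInstance.maxHeartbeats 1000000 in
set_option maxHeartbeats 4000000 in
/-- first path block, s ≥ 10 -/
lemma loc_pfirst (x0 x1 xm1 y0 y1 y2 y3 y4 y5 : Bool)
    (hp0 : x0 = true ∨ y1 = true ∨ twoOf (y2 = true) (x1 = true) (xm1 = true))
    (hp1 : y0 = true ∨ y2 = true ∨ (x0 = true ∧ y3 = true))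
    (hp2 : y1 = true ∨ y3 = true ∨ (y0 = true ∧ y4 = true))
    (hp3 : y2 = true ∨ y4 = true ∨ (y1 = true ∧ y5 = true)) :
    2 ≤ y0.toNat + y1.toNat + y2.toNat + y3.toNat + y4.toNat := by
  unfold twoOf at hp0
  revert hp0 hp1 hp2 hp3; revert x0 x1 xm1 y0 y1 y2 y3 y4 y5; decide

set_option maxRecDepth 10000 in
set_option synthInstance.maxSize 2000 in
set_option synthInstance.maxHeartbeats 1000000 in
set_option maxHeartbeats 4000000 in
/-- last path block, s ≥ 10: z0..z5 = y(s-6)..y(s-1) -/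
lemma loc_plast (z0 z1 z2 z3 z4 z5 : Bool)
    (hp4 : z1 = true ∨ z3 = true ∨ (z0 = true ∧ z4 = true))
    (hp3 : z2 = true ∨ z4 = true ∨ (z1 = true ∧ z5 = true))
    (hp2 : z3 = true ∨ z5 = true)
    (hp1 : z4 = true) :
    2 ≤ z1.toNat + z2.toNat + z3.toNat + z4.toNat + z5.toNat := by
  revert hp4 hp3 hp2 hp1; revert z0 z1 z2 z3 z4 z5; decide




def Fwin (hr : 0 < r) (S : Finset (Fin r ⊕ Fin s)) (t : ℕ) : ℕ :=
  (bb hr S t).toNat + (bb hr S (t+1)).toNat + (bb hr S (t+2)).toNat +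
    (bb hr S (t+3)).toNat + (bb hr S (t+4)).toNat

/-! ### summation machinery -/

lemma shift1 (n : ℕ) (g : ℕ → ℕ) (hg : g n = g 0) :
    ∑ t ∈ Finset.range n, g (t+1) = ∑ t ∈ Finset.range n, g t := by
  have h1 := Finset.sum_range_succ' g n
  have h2 := Finset.sum_range_succ g n
  omega

lemma shiftk (n : ℕ) (g : ℕ → ℕ) (hg : ∀ a, g (a + n) = g a) (k : ℕ) :
    ∑ t ∈ Finset.range n, g (t + k) = ∑ t ∈ Finset.range n, g t := by
  induction k with
  | zero => simp
  | succ k ih =>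
    have e : ∀ t : ℕ, t + (k+1) = (t + k) + 1 := by omega
    calc ∑ t ∈ Finset.range n, g (t + (k+1))
        = ∑ t ∈ Finset.range n, (fun z => g (z + k)) (t + 1) := by
          apply Finset.sum_congr rfl; intro t _; rw [e t]; ring_nf
      _ = ∑ t ∈ Finset.range n, (fun z => g (z + k)) t := by
          exact shift1 n (fun z => g (z + k))
            (by show g (n + k) = g (0 + k)
                rw [show n + k = k + n by ring, hg k, Nat.zero_add])
      _ = ∑ t ∈ Finset.range n, g (t + k) := by simp
      _ = ∑ t ∈ Finset.range n, g t := ih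

lemma sum_blocks (f : ℕ → ℕ) (q : ℕ) :
    ∑ j ∈ Finset.range (5*q), f j =
      ∑ k ∈ Finset.range q, (f (5*k) + f (5*k+1) + f (5*k+2) + f (5*k+3) + f (5*k+4)) := by
  induction q with
  | zero => simp
  | succ q ih =>
    rw [Finset.sum_range_succ]
    rw [show 5 * (q+1) = (5*q+4)+1 by ring, Finset.sum_range_succ]
    rw [show 5*q+4 = (5*q+3)+1 by ring, Finset.sum_range_succ]
    rw [show 5*q+3 = (5*q+2)+1 by ring, Finset.sum_range_succ]
    rw [show 5*q+2 = (5*q+1)+1 by ring, Finset.sum_range_succ]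
    rw [show 5*q+1 = (5*q)+1 by rfl, Finset.sum_range_succ]
    omega


/-! ### cycle lower bound -/

lemma cycle_bound (hr : 0 < r) (hr5 : 5 ≤ r) (hrm : r % 5 = 0) (hs5 : 5 ≤ s)
    (S : Finset (Fin r ⊕ Fin s)) (hS : IsDTDSet (keyG r s) S) :
    2 * r ≤ 5 * ∑ u ∈ Finset.range r, (bb hr S u).toNat := by
  have hper : ∀ a, (bb hr S (a + r)).toNat = (bb hr S a).toNat := fun a => by
    rw [bb_reduce hr S (show a + r = a + 1 * r by ring)]
  rcases (show r = 5 ∨ 10 ≤ r by omega) with hreq | hr10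
  · -- r = 5
    have h2 := conGen hr hr5 hs5 S hS (i := 2) (by omega) (by omega)
    have h3 := conGen hr hr5 hs5 S hS (i := 3) (by omega) (by omega)
    rw [bb_reduce hr S (show (3:ℕ)+2 = 0 + 1 * r by omega)] at h3
    have key := loc_r5 (bb hr S 0) (bb hr S 1) (bb hr S 2) (bb hr S 3) (bb hr S 4) h2 h3
    have hexp : ∑ u ∈ Finset.range r, (bb hr S u).toNat =
        (bb hr S 0).toNat + (bb hr S 1).toNat + (bb hr S 2).toNat + (bb hr S 3).toNat +
          (bb hr S 4).toNat := by
      have e : Finset.range r = Finset.range 5 := by rw [hreq]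
      rw [e]
      simp [Finset.sum_range_succ]
      all_goals omega
    omega
  · -- r ≥ 10
    -- window function summed over all of range r equals 5 * total
    have hFtot : ∑ t ∈ Finset.range r, Fwin hr S t =
        5 * ∑ u ∈ Finset.range r, (bb hr S u).toNat := by
      simp only [Fwin]
      rw [Finset.sum_add_distrib, Finset.sum_add_distrib, Finset.sum_add_distrib,
        Finset.sum_add_distrib]
      have e1 := shiftk r (fun u => (bb hr S u).toNat) hper 1
      have e2 := shiftk r (fun u => (bb hr S u).toNat) hper 2
      have e3 := shiftk r (fun u => (bb hr S u).toNat) hper 3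
      have e4 := shiftk r (fun u => (bb hr S u).toNat) hper 4
      omega
    have hsplit : ∑ t ∈ Finset.range r, Fwin hr S t =
        (∑ t ∈ Finset.Ico 0 1, Fwin hr S t + ∑ t ∈ Finset.Ico 1 (r-4), Fwin hr S t) + ∑ t ∈ Finset.Ico (r-4) r, Fwin hr S t := by
      rw [Finset.sum_Ico_consecutive (Fwin hr S) (show (0:ℕ) ≤ 1 by omega) (show 1 ≤ r - 4 by omega),
        Finset.sum_Ico_consecutive (Fwin hr S) (show (0:ℕ) ≤ r - 4 by omega) (show r - 4 ≤ r by omega),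
        Finset.range_eq_Ico]
    have hmid : 2 * (r - 5) ≤ ∑ t ∈ Finset.Ico 1 (r-4), Fwin hr S t := by
      have hb : ∀ t ∈ Finset.Ico 1 (r-4), 2 ≤ Fwin hr S t := by
        intro t ht
        rw [Finset.mem_Ico] at ht
        exact loc_window (bb hr S (t-1)) (bb hr S t) (bb hr S (t+1)) (bb hr S (t+2))
          (bb hr S (t+3)) (bb hr S (t+4)) (bb hr S (t+5))
          (conGen hr hr5 hs5 S hS (i := t+1) (by omega) (by omega))
          (conGen hr hr5 hs5 S hS (i := t+2) (by omega) (by omega))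
          (conGen hr hr5 hs5 S hS (i := t+3) (by omega) (by omega))
      have hle : (Finset.Ico 1 (r-4)).card • 2 ≤ ∑ t ∈ Finset.Ico 1 (r-4), Fwin hr S t :=
        Finset.card_nsmul_le_sum (Finset.Ico 1 (r-4)) (fun t => Fwin hr S t) 2 hb
      rw [Nat.card_Ico, smul_eq_mul] at hle
      omega
    have hjun : 6 ≤ ∑ t ∈ Finset.Ico 0 1, Fwin hr S t + ∑ t ∈ Finset.Ico (r-4) r, Fwin hr S t := by
      have hbr0 : bb hr S r = bb hr S 0 := bb_reduce hr S (show r = 0 + 1*r by omega)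
      have hbr1 : bb hr S (r+1) = bb hr S 1 := bb_reduce hr S (show r+1 = 1 + 1*r by omega)
      have hbr2 : bb hr S (r+2) = bb hr S 2 := bb_reduce hr S (show r+2 = 2 + 1*r by omega)
      have hbr3 : bb hr S (r+3) = bb hr S 3 := bb_reduce hr S (show r+3 = 3 + 1*r by omega)
      have hm4 := conGen hr hr5 hs5 S hS (i := r-4) (by omega) (by omega)
      rw [show r-4-1 = r-5 by omega, show r-4+1 = r-3 by omega, show r-4-2 = r-6 by omega,
        show r-4+2 = r-2 by omega] at hm4
      have hm3 := conGen hr hr5 hs5 S hS (i := r-3) (by omega) (by omega)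
      rw [show r-3-1 = r-4 by omega, show r-3+1 = r-2 by omega, show r-3-2 = r-5 by omega,
        show r-3+2 = r-1 by omega] at hm3
      have hm2 := conGen hr hr5 hs5 S hS (i := r-2) (by omega) (by omega)
      rw [show r-2-1 = r-3 by omega, show r-2+1 = r-1 by omega, show r-2-2 = r-4 by omega,
        show r-2+2 = r by omega, hbr0] at hm2
      have hm1 := conCr1 hr hr5 hs5 S hS
      have h0 := conC0 hr hr5 hs5 S hS
      have h1 := conC1 hr hr5 hs5 S hS
      have h2 := conGen hr hr5 hs5 S hS (i := 2) (by omega) (by omega)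
      have h3 := conGen hr hr5 hs5 S hS (i := 3) (by omega) (by omega)
      have h4 := conGen hr hr5 hs5 S hS (i := 4) (by omega) (by omega)
      have key := loc_junction (bb hr S (r-6)) (bb hr S (r-5)) (bb hr S (r-4)) (bb hr S (r-3))
        (bb hr S (r-2)) (bb hr S (r-1)) (bb hr S 0) (bb hr S 1) (bb hr S 2) (bb hr S 3)
        (bb hr S 4) (bb hr S 5) (bb hr S 6) (yy r S 0) (yy r S 1)
        hm4 hm3 hm2 hm1 h0 h1 h2 h3 h4
      have e0 : ∑ t ∈ Finset.Ico 0 1, Fwin hr S t = Fwin hr S 0 := by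
        rw [← Finset.range_eq_Ico]
        exact Finset.sum_range_one _
      have e4 : ∑ t ∈ Finset.Ico (r-4) r, Fwin hr S t =
          Fwin hr S (r-4) + Fwin hr S (r-3) + Fwin hr S (r-2) + Fwin hr S (r-1) := by
        rw [Finset.sum_Ico_eq_sum_range, show r - (r-4) = 4 by omega]
        simp only [Finset.sum_range_succ, Finset.sum_range_zero, Nat.zero_add, Nat.add_zero]
        rw [show r-4+1 = r-3 by omega, show r-4+2 = r-2 by omega, show r-4+3 = r-1 by omega]
      rw [e0, e4]
      simp only [Fwin, Nat.zero_add]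
      rw [show r-4+1 = r-3 by omega, show r-3+1 = r-2 by omega, show r-2+1 = r-1 by omega,
        show r-1+1 = r by omega, show r-4+2 = r-2 by omega, show r-3+2 = r-1 by omega,
        show r-2+2 = r by omega, show r-4+3 = r-1 by omega, show r-3+3 = r by omega,
        show r-4+4 = r by omega, show r-3+4 = r+1 by omega, show r-2+3 = r+1 by omega,
        show r-1+2 = r+1 by omega, show r-2+4 = r+2 by omega, show r-1+3 = r+2 by omega,
        show r-1+4 = r+3 by omega, hbr0, hbr1, hbr2, hbr3]
      omega
    omega

/-! ### path lower bound -/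

lemma path_bound (hr : 0 < r) (hr5 : 5 ≤ r) (hsm : s % 5 = 0) (hs5 : 5 ≤ s)
    (S : Finset (Fin r ⊕ Fin s)) (hS : IsDTDSet (keyG r s) S) :
    2 * s ≤ 5 * ∑ j ∈ Finset.range s, (yy r S j).toNat := by
  obtain ⟨q, hq⟩ : ∃ q, s = 5 * q := ⟨s / 5, by omega⟩
  have hq1 : 1 ≤ q := by omega
  have hsum : ∑ j ∈ Finset.range s, (yy r S j).toNat =
      ∑ k ∈ Finset.range q, ((yy r S (5*k)).toNat + (yy r S (5*k+1)).toNat +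
        (yy r S (5*k+2)).toNat + (yy r S (5*k+3)).toNat + (yy r S (5*k+4)).toNat) := by
    have e : Finset.range s = Finset.range (5*q) := by rw [hq]
    rw [e]; exact sum_blocks _ q
  have hblock : ∀ k ∈ Finset.range q, 2 ≤ (yy r S (5*k)).toNat + (yy r S (5*k+1)).toNat +
      (yy r S (5*k+2)).toNat + (yy r S (5*k+3)).toNat + (yy r S (5*k+4)).toNat := by
    intro k hk
    rw [Finset.mem_range] at hk
    rcases (show s = 5 ∨ 10 ≤ s by omega) with hseq | hs10
    · -- s = 5 : q = 1, k = 0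
      have hk0 : k = 0 := by omega
      subst hk0
      simp only [Nat.mul_zero, Nat.zero_add]
      have hps2 := conPs2 hr hr5 hs5 S hS
      rw [show s-3 = 2 by omega, show s-1 = 4 by omega] at hps2
      have hps1 := conPs1 hr hr5 hs5 S hS
      rw [show s-2 = 3 by omega] at hps1
      exact loc_s5 (bb hr S 0) (bb hr S 1) (bb hr S (r-1)) (yy r S 0) (yy r S 1) (yy r S 2)
        (yy r S 3) (yy r S 4)
        (conP0 hr hr5 hs5 S hS) (conP1 hr hr5 hs5 S hS)
        (conPgen hr hr5 hs5 S hS (j := 2) (by omega) (by omega)) hps2 hps1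
    · rcases (show k = 0 ∨ (1 ≤ k ∧ k ≤ q - 2) ∨ (1 ≤ k ∧ k = q - 1) by omega)
        with hk0 | ⟨hk1, hk2⟩ | ⟨hk1, hk2⟩
      · subst hk0
        simp only [Nat.mul_zero, Nat.zero_add]
        exact loc_pfirst (bb hr S 0) (bb hr S 1) (bb hr S (r-1)) (yy r S 0) (yy r S 1)
          (yy r S 2) (yy r S 3) (yy r S 4) (yy r S 5)
          (conP0 hr hr5 hs5 S hS) (conP1 hr hr5 hs5 S hS)
          (conPgen hr hr5 hs5 S hS (j := 2) (by omega) (by omega))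
          (conPgen hr hr5 hs5 S hS (j := 3) (by omega) (by omega))
      · exact loc_window (yy r S (5*k-1)) (yy r S (5*k)) (yy r S (5*k+1)) (yy r S (5*k+2))
          (yy r S (5*k+3)) (yy r S (5*k+4)) (yy r S (5*k+5))
          (conPgen hr hr5 hs5 S hS (j := 5*k+1) (by omega) (by omega))
          (conPgen hr hr5 hs5 S hS (j := 5*k+2) (by omega) (by omega))
          (conPgen hr hr5 hs5 S hS (j := 5*k+3) (by omega) (by omega))
      · -- last block
        rw [show 5*k = s - 5 by omega]
        rw [show s-5+1 = s-4 by omega, show s-5+2 = s-3 by omega, show s-5+3 = s-2 by omega,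
          show s-5+4 = s-1 by omega]
        have hg4 := conPgen hr hr5 hs5 S hS (j := s-4) (by omega) (by omega)
        rw [show s-4-1 = s-5 by omega, show s-4+1 = s-3 by omega, show s-4-2 = s-6 by omega,
          show s-4+2 = s-2 by omega] at hg4
        have hg3 := conPgen hr hr5 hs5 S hS (j := s-3) (by omega) (by omega)
        rw [show s-3-1 = s-4 by omega, show s-3+1 = s-2 by omega, show s-3-2 = s-5 by omega,
          show s-3+2 = s-1 by omega] at hg3
        exact loc_plast (yy r S (s-6)) (yy r S (s-5)) (yy r S (s-4)) (yy r S (s-3))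
          (yy r S (s-2)) (yy r S (s-1)) hg4 hg3
          (conPs2 hr hr5 hs5 S hS) (conPs1 hr hr5 hs5 S hS)
  have htot : 2 * q ≤ ∑ k ∈ Finset.range q, ((yy r S (5*k)).toNat + (yy r S (5*k+1)).toNat +
      (yy r S (5*k+2)).toNat + (yy r S (5*k+3)).toNat + (yy r S (5*k+4)).toNat) := by
    calc 2 * q = (Finset.range q).card • 2 := by rw [Finset.card_range, smul_eq_mul]; omega
      _ ≤ _ := Finset.card_nsmul_le_sum _ _ _ hblock
  omega




/-! ### cardinality split -/

lemma card_split (hr : 0 < r) (S : Finset (Fin r ⊕ Fin s)) :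
    S.card = ∑ u ∈ Finset.range r, (bb hr S u).toNat +
      ∑ j ∈ Finset.range s, (yy r S j).toNat := by
  classical
  have h1 : S.card = ∑ v ∈ (Finset.univ : Finset (Fin r ⊕ Fin s)), (if v ∈ S then 1 else 0) := by
    rw [Finset.sum_ite_mem, Finset.univ_inter, Finset.card_eq_sum_ones]
  rw [h1, Fintype.sum_sum_type]
  congr 1
  · rw [← Fin.sum_univ_eq_sum_range (fun u => (bb hr S u).toNat) r]
    apply Finset.sum_congr rfl
    intro i _
    have hcv : cv s hr (i : ℕ) = Sum.inl i := by
      simp [cv, Nat.mod_eq_of_lt i.isLt]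
    by_cases h : Sum.inl i ∈ S <;> simp [bb, hcv, h]
  · rw [← Fin.sum_univ_eq_sum_range (fun j => (yy r S j).toNat) s]
    apply Finset.sum_congr rfl
    intro j _
    have hj : (j : ℕ) < s := j.isLt
    by_cases h : Sum.inr j ∈ S <;> simp [yy, hj, pv, h]

/-! ### the optimal set -/

def Sopt (r s : ℕ) : Finset (Fin r ⊕ Fin s) :=
  (Finset.univ.filter (fun i : Fin r => (i : ℕ) % 5 = 1 ∨ (i : ℕ) % 5 = 2)).image Sum.inl ∪
  (Finset.univ.filter (fun j : Fin s => (j : ℕ) % 5 = 2 ∨ (j : ℕ) % 5 = 3)).image Sum.inr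

lemma mem_Sopt_inl {i : Fin r} :
    Sum.inl i ∈ Sopt r s ↔ ((i : ℕ) % 5 = 1 ∨ (i : ℕ) % 5 = 2) := by
  simp [Sopt]

lemma mem_Sopt_inr {j : Fin s} :
    Sum.inr j ∈ Sopt r s ↔ ((j : ℕ) % 5 = 2 ∨ (j : ℕ) % 5 = 3) := by
  simp [Sopt]

lemma filter_card_pattern (n : ℕ) (hn : n % 5 = 0) (a b : ℕ)
    (ha : a < 5) (hb : b < 5) (hab : a ≠ b) :
    (Finset.univ.filter (fun i : Fin n => (i : ℕ) % 5 = a ∨ (i : ℕ) % 5 = b)).card = 2 * (n / 5) := by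
  classical
  rw [Finset.card_filter]
  rw [Fin.sum_univ_eq_sum_range (fun u => if u % 5 = a ∨ u % 5 = b then 1 else 0) n]
  rw [show n = 5 * (n / 5) by omega]
  rw [sum_blocks (fun u => if u % 5 = a ∨ u % 5 = b then 1 else 0) (n / 5)]
  have hterm : ∀ k ∈ Finset.range (n / 5),
      ((if (5*k) % 5 = a ∨ (5*k) % 5 = b then 1 else 0) +
       (if (5*k+1) % 5 = a ∨ (5*k+1) % 5 = b then 1 else 0) +
       (if (5*k+2) % 5 = a ∨ (5*k+2) % 5 = b then 1 else 0) +
       (if (5*k+3) % 5 = a ∨ (5*k+3) % 5 = b then 1 else 0) +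
       (if (5*k+4) % 5 = a ∨ (5*k+4) % 5 = b then 1 else 0)) = 2 := by
    intro k _
    have e0 : (5*k) % 5 = 0 := by omega
    have e1 : (5*k+1) % 5 = 1 := by omega
    have e2 : (5*k+2) % 5 = 2 := by omega
    have e3 : (5*k+3) % 5 = 3 := by omega
    have e4 : (5*k+4) % 5 = 4 := by omega
    rw [e0, e1, e2, e3, e4]
    have : ∀ c : ℕ, c < 5 → (if c = a ∨ c = b then 1 else 0) = if c = a ∨ c = b then 1 else 0 :=
      fun _ _ => rfl
    rcases (show (a = 0 ∨ a = 1 ∨ a = 2 ∨ a = 3 ∨ a = 4) by omega) with rfl|rfl|rfl|rfl|rfl <;>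
      rcases (show (b = 0 ∨ b = 1 ∨ b = 2 ∨ b = 3 ∨ b = 4) by omega) with rfl|rfl|rfl|rfl|rfl <;>
      simp at hab ⊢
  rw [Finset.sum_congr rfl hterm, Finset.sum_const, Finset.card_range, smul_eq_mul]
  omega

lemma Sopt_card (hrm : r % 5 = 0) (hsm : s % 5 = 0) :
    (Sopt r s).card = 2 * (r + s) / 5 := by
  classical
  have hdisj : Disjoint
      ((Finset.univ.filter (fun i : Fin r => (i : ℕ) % 5 = 1 ∨ (i : ℕ) % 5 = 2)).image Sum.inl)
      ((Finset.univ.filter (fun j : Fin s => (j : ℕ) % 5 = 2 ∨ (j : ℕ) % 5 = 3)).image Sum.inr) := by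
    rw [Finset.disjoint_left]
    intro v hv hw
    simp only [Finset.mem_image] at hv hw
    obtain ⟨x, -, hx⟩ := hv
    obtain ⟨y, -, hy⟩ := hw
    rw [← hx] at hy
    exact absurd hy (by simp)
  rw [Sopt, Finset.card_union_of_disjoint hdisj,
    Finset.card_image_of_injective _ Sum.inl_injective,
    Finset.card_image_of_injective _ Sum.inr_injective,
    filter_card_pattern r hrm 1 2 (by omega) (by omega) (by omega),
    filter_card_pattern s hsm 2 3 (by omega) (by omega) (by omega)]
  omega




lemma Sopt_isDTD (hr : 0 < r) (hr5 : 5 ≤ r) (hrm : r % 5 = 0) (hs5 : 5 ≤ s) (hsm : s % 5 = 0) :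
    IsDTDSet (keyG r s) (Sopt r s) := by
  intro v
  cases v with
  | inl i =>
    have hn : (i : ℕ) < r := i.isLt
    rcases (show (i:ℕ)%5 = 0 ∨ (i:ℕ)%5 = 1 ∨ (i:ℕ)%5 = 2 ∨ (i:ℕ)%5 = 3 ∨ (i:ℕ)%5 = 4 by omega)
      with h|h|h|h|h
    · left
      refine ⟨Sum.inl ⟨(i:ℕ)+1, by omega⟩, ?_, ?_⟩
      · rw [mem_Sopt_inl]; left; simp only [Fin.val_mk]; all_goals omega
      · rw [adj_inl_inl (by omega)]; left
        simp only [Fin.val_mk]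
        exact Nat.mod_eq_of_lt (by omega)
    · left
      refine ⟨Sum.inl ⟨(i:ℕ)+1, by omega⟩, ?_, ?_⟩
      · rw [mem_Sopt_inl]; right; simp only [Fin.val_mk]; all_goals omega
      · rw [adj_inl_inl (by omega)]; left
        simp only [Fin.val_mk]
        exact Nat.mod_eq_of_lt (by omega)
    · left
      refine ⟨Sum.inl ⟨(i:ℕ)-1, by omega⟩, ?_, ?_⟩
      · rw [mem_Sopt_inl]; left; simp only [Fin.val_mk]; all_goals omega
      · rw [adj_inl_inl (by omega)]; right
        simp only [Fin.val_mk]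
        rw [show (i:ℕ)-1+1 = (i:ℕ) by omega]
        exact Nat.mod_eq_of_lt (by omega)
    · left
      refine ⟨Sum.inl ⟨(i:ℕ)-1, by omega⟩, ?_, ?_⟩
      · rw [mem_Sopt_inl]; right; simp only [Fin.val_mk]; all_goals omega
      · rw [adj_inl_inl (by omega)]; right
        simp only [Fin.val_mk]
        rw [show (i:ℕ)-1+1 = (i:ℕ) by omega]
        exact Nat.mod_eq_of_lt (by omega)
    · right
      rcases (show (i:ℕ) = r - 1 ∨ (i:ℕ) ≤ r - 3 by omega) with hi | hi
      · refine ⟨Sum.inl ⟨r-3, by omega⟩, ?_, Sum.inl ⟨1, by omega⟩, ?_, ?_, ?_, ?_⟩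
        · rw [mem_Sopt_inl]; right; simp only [Fin.val_mk]; all_goals omega
        · rw [mem_Sopt_inl]; left; simp only [Fin.val_mk]; all_goals omega
        · simp only [ne_eq, Sum.inl.injEq, Fin.mk.injEq]; omega
        · apply dist_eq_two_intro (m := Sum.inl ⟨r-2, by omega⟩)
          · rw [adj_inl_inl (by omega)]; right
            simp only [Fin.val_mk]
            rw [show r-2+1 = r-1 by omega, Nat.mod_eq_of_lt (by omega)]
            omega
          · rw [adj_inl_inl (by omega)]; right
            simp only [Fin.val_mk]
            rw [show r-3+1 = r-2 by omega, Nat.mod_eq_of_lt (by omega)]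
          · simp only [ne_eq, Sum.inl.injEq, Fin.ext_iff, Fin.val_mk]; omega
          · rw [adj_inl_inl (by omega)]
            simp only [Fin.val_mk]
            rintro (hc | hc)
            · rw [show (i:ℕ)+1 = r by omega, Nat.mod_self] at hc; omega
            · rw [show r-3+1 = r-2 by omega, Nat.mod_eq_of_lt (by omega)] at hc; omega
        · apply dist_eq_two_intro (m := Sum.inl ⟨0, by omega⟩)
          · rw [adj_inl_inl (by omega)]; left
            simp only [Fin.val_mk]
            rw [show (i:ℕ)+1 = r by omega, Nat.mod_self]
          · rw [adj_inl_inl (by omega)]; left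
            simp only [Fin.val_mk]
            rw [Nat.zero_add, Nat.mod_eq_of_lt (by omega)]
          · simp only [ne_eq, Sum.inl.injEq, Fin.ext_iff, Fin.val_mk]; omega
          · rw [adj_inl_inl (by omega)]
            simp only [Fin.val_mk]
            rintro (hc | hc)
            · rw [show (i:ℕ)+1 = r by omega, Nat.mod_self] at hc; omega
            · rw [Nat.mod_eq_of_lt (by omega)] at hc; omega
      · have h4 : 4 ≤ (i:ℕ) := by omega
        refine ⟨Sum.inl ⟨(i:ℕ)-2, by omega⟩, ?_, Sum.inl ⟨(i:ℕ)+2, by omega⟩, ?_, ?_, ?_, ?_⟩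
        · rw [mem_Sopt_inl]; right; simp only [Fin.val_mk]; all_goals omega
        · rw [mem_Sopt_inl]; left; simp only [Fin.val_mk]; all_goals omega
        · simp only [ne_eq, Sum.inl.injEq, Fin.mk.injEq]; omega
        · apply dist_eq_two_intro (m := Sum.inl ⟨(i:ℕ)-1, by omega⟩)
          · rw [adj_inl_inl (by omega)]; right
            simp only [Fin.val_mk]
            rw [show (i:ℕ)-1+1 = (i:ℕ) by omega, Nat.mod_eq_of_lt (by omega)]
          · rw [adj_inl_inl (by omega)]; right
            simp only [Fin.val_mk]
            rw [show (i:ℕ)-2+1 = (i:ℕ)-1 by omega, Nat.mod_eq_of_lt (by omega)]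
          · simp only [ne_eq, Sum.inl.injEq, Fin.ext_iff, Fin.val_mk]; omega
          · rw [adj_inl_inl (by omega)]
            simp only [Fin.val_mk]
            rintro (hc | hc)
            · rw [Nat.mod_eq_of_lt (by omega)] at hc; omega
            · rw [show (i:ℕ)-2+1 = (i:ℕ)-1 by omega, Nat.mod_eq_of_lt (by omega)] at hc; omega
        · apply dist_eq_two_intro (m := Sum.inl ⟨(i:ℕ)+1, by omega⟩)
          · rw [adj_inl_inl (by omega)]; left
            simp only [Fin.val_mk]
            exact Nat.mod_eq_of_lt (by omega)
          · rw [adj_inl_inl (by omega)]; left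
            simp only [Fin.val_mk]
            exact Nat.mod_eq_of_lt (by omega)
          · simp only [ne_eq, Sum.inl.injEq, Fin.ext_iff, Fin.val_mk]; omega
          · rw [adj_inl_inl (by omega)]
            simp only [Fin.val_mk]
            rintro (hc | hc)
            · rw [Nat.mod_eq_of_lt (by omega)] at hc; omega
            · rw [Nat.mod_eq_of_lt (by omega)] at hc; omega
  | inr j =>
    have hj : (j : ℕ) < s := j.isLt
    rcases (show (j:ℕ)%5 = 0 ∨ (j:ℕ)%5 = 1 ∨ (j:ℕ)%5 = 2 ∨ (j:ℕ)%5 = 3 ∨ (j:ℕ)%5 = 4 by omega)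
      with h|h|h|h|h
    · right
      rcases (show (j:ℕ) = 0 ∨ 5 ≤ (j:ℕ) by omega) with hj0 | hj5
      · refine ⟨Sum.inr ⟨2, by omega⟩, ?_, Sum.inl ⟨1, by omega⟩, ?_, ?_, ?_, ?_⟩
        · rw [mem_Sopt_inr]; left; simp only [Fin.val_mk]
        · rw [mem_Sopt_inl]; left; simp only [Fin.val_mk]
        · simp
        · apply dist_eq_two_intro (m := Sum.inr ⟨1, by omega⟩)
          · rw [adj_inr_inr]; left; simp only [Fin.val_mk]; all_goals omega
          · rw [adj_inr_inr]; left; simp only [Fin.val_mk]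
          · simp only [ne_eq, Sum.inr.injEq, Fin.ext_iff, Fin.val_mk]; omega
          · rw [adj_inr_inr]
            simp only [Fin.val_mk]
            omega
        · apply dist_eq_two_intro (m := Sum.inl ⟨0, by omega⟩)
          · rw [adj_inr_inl]; exact ⟨rfl, hj0⟩
          · rw [adj_inl_inl (by omega)]; left
            simp only [Fin.val_mk]
            rw [Nat.zero_add, Nat.mod_eq_of_lt (by omega)]
          · simp
          · rw [adj_inr_inl]
            rintro ⟨hc, -⟩
            simp only [Fin.val_mk] at hc
            omega
      · refine ⟨Sum.inr ⟨(j:ℕ)-2, by omega⟩, ?_, Sum.inr ⟨(j:ℕ)+2, by omega⟩, ?_, ?_, ?_, ?_⟩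
        · rw [mem_Sopt_inr]; right; simp only [Fin.val_mk]; all_goals omega
        · rw [mem_Sopt_inr]; left; simp only [Fin.val_mk]; all_goals omega
        · simp only [ne_eq, Sum.inr.injEq, Fin.mk.injEq]; omega
        · apply dist_eq_two_intro (m := Sum.inr ⟨(j:ℕ)-1, by omega⟩)
          · rw [adj_inr_inr]; right; simp only [Fin.val_mk]; all_goals omega
          · rw [adj_inr_inr]; right; simp only [Fin.val_mk]; all_goals omega
          · simp only [ne_eq, Sum.inr.injEq, Fin.ext_iff, Fin.val_mk]; omega
          · rw [adj_inr_inr]; simp only [Fin.val_mk]; all_goals omega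
        · apply dist_eq_two_intro (m := Sum.inr ⟨(j:ℕ)+1, by omega⟩)
          · rw [adj_inr_inr]; left; simp only [Fin.val_mk]
          · rw [adj_inr_inr]; left; simp only [Fin.val_mk]
          · simp only [ne_eq, Sum.inr.injEq, Fin.ext_iff, Fin.val_mk]; omega
          · rw [adj_inr_inr]; simp only [Fin.val_mk]; all_goals omega
    · left
      refine ⟨Sum.inr ⟨(j:ℕ)+1, by omega⟩, ?_, ?_⟩
      · rw [mem_Sopt_inr]; left; simp only [Fin.val_mk]; all_goals omega
      · rw [adj_inr_inr]; left; simp only [Fin.val_mk]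
    · left
      refine ⟨Sum.inr ⟨(j:ℕ)+1, by omega⟩, ?_, ?_⟩
      · rw [mem_Sopt_inr]; right; simp only [Fin.val_mk]; all_goals omega
      · rw [adj_inr_inr]; left; simp only [Fin.val_mk]
    · left
      refine ⟨Sum.inr ⟨(j:ℕ)-1, by omega⟩, ?_, ?_⟩
      · rw [mem_Sopt_inr]; left; simp only [Fin.val_mk]; all_goals omega
      · rw [adj_inr_inr]; right; simp only [Fin.val_mk]; all_goals omega
    · left
      refine ⟨Sum.inr ⟨(j:ℕ)-1, by omega⟩, ?_, ?_⟩
      · rw [mem_Sopt_inr]; right; simp only [Fin.val_mk]; all_goals omega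
      · rw [adj_inr_inr]; right; simp only [Fin.val_mk]; all_goals omega


end DTDAux

/-- For the key L_{r,s} with r ≡ 0 (mod 5), s ≡ 0 (mod 5), r ≥ 5, s ≥ 1, the
disjunctive total domination number is 2n/5 where n = r + s. -/
theorem dtd_key (r s : ℕ) (hr : r % 5 = 0) (hs : s % 5 = 0) (hr5 : 5 ≤ r)
    (hs1 : 1 ≤ s) :
    dtdNum (keyG r s) = 2 * (r + s) / 5 := by
  have hr0 : 0 < r := by omega
  have hs5 : 5 ≤ s := by omega
  have hDTD := DTDAux.Sopt_isDTD (r := r) (s := s) hr0 hr5 hr hs5 hs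
  have hcard := DTDAux.Sopt_card (r := r) (s := s) hr hs
  have hmem : (2*(r+s)/5) ∈
      {k | ∃ S : Finset (Fin r ⊕ Fin s), IsDTDSet (keyG r s) S ∧ S.card = k} :=
    ⟨DTDAux.Sopt r s, hDTD, hcard⟩
  have hub : dtdNum (keyG r s) ≤ 2*(r+s)/5 := Nat.sInf_le hmem
  have hnon : {k | ∃ S : Finset (Fin r ⊕ Fin s), IsDTDSet (keyG r s) S ∧ S.card = k}.Nonempty :=
    ⟨_, hmem⟩
  obtain ⟨T, hT, hTc⟩ := Nat.sInf_mem hnon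
  have h1 := DTDAux.cycle_bound hr0 hr5 hr hs5 T hT
  have h2 := DTDAux.path_bound hr0 hr5 hs hs5 T hT
  have h3 := DTDAux.card_split hr0 T
  have hdef : dtdNum (keyG r s) =
      sInf {k | ∃ S : Finset (Fin r ⊕ Fin s), IsDTDSet (keyG r s) S ∧ S.card = k} := rfl
  rw [← hdef] at hTc
  omega
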